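/- For any u, v ∈ {1,2}^{ℤ_{>0}}, the Lipschitz distance between X_u and X_v satisfies d_L(X_u, X_v) ≤ 2 log 2. -/

import Mathlib

open ENNReal

/-- The dilation (smallest Lipschitz constant) of a map between metric spaces. -/
noncomputable def dil {X : Type*} {Y : Type*} [MetricSpace X] [MetricSpace Y]
    (f : X → Y) : ℝ :=
  sInf {K : ℝ | ∀ x y : X, dist (f x) (f y) ≤ K * dist x y}

/-- A bijection is a bi-Lipschitz homeomorphism if it and its inverse are Lipschitz. -/
def IsBiLipschitzEquiv {X : Type*} {Y : Type*} [MetricSpace X] [MetricSpace Y]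
    (f : X ≃ Y) : Prop :=
  (∃ K : NNReal, LipschitzWith K f) ∧ (∃ K : NNReal, LipschitzWith K f.symm)

/-- The quantity `|log dil f| + |log dil f⁻¹|`. -/
noncomputable def lipCost {X : Type*} {Y : Type*} [MetricSpace X] [MetricSpace Y]
    (f : X ≃ Y) : ℝ :=
  |Real.log (dil (f : X → Y))| + |Real.log (dil (f.symm : Y → X))|

/-- The Lipschitz distance: the infimum of `|log dil f| + |log dil f⁻¹|` over all
bi-Lipschitz homeomorphisms `f : X → Y` (`∞` if none exists). -/
noncomputable def lipDist (X : Type*) (Y : Type*) [MetricSpace X] [MetricSpace Y] : ℝ≥0∞ :=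
  ⨅ (f : X ≃ Y) (_ : IsBiLipschitzEquiv f), ENNReal.ofReal (lipCost f)

/-- The interval `I(n,m) = [1/2^n, 1/2^n + 1/2^(n+m)]`. -/
def Iset (n m : ℕ) : Set ℝ := Set.Icc ((1:ℝ)/2^n) ((1:ℝ)/2^n + 1/2^(n+m))

/-- `X_u = {0} ∪ ⋃_{n ≥ 1} I(n, u_n)`, with the Euclidean metric inherited from `ℝ`. -/
def Xset (u : ℕ+ → ℕ) : Set ℝ := {0} ∪ ⋃ n : ℕ+, Iset (n : ℕ) (u n)

namespace XsetAux

open Classical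

/-- The translation map: on each interval `I(n, u n)` it is the affine map onto
`I(n, v n)` fixing the left endpoint; elsewhere the identity. -/
noncomputable def trans (u v : ℕ+ → ℕ) (x : ℝ) : ℝ :=
  if h : ∃ n : ℕ+, x ∈ Iset (n : ℕ) (u n) then
    1/2^(h.choose : ℕ) + (x - 1/2^(h.choose : ℕ)) * (2^(u h.choose) / 2^(v h.choose))
  else x

lemma one_div_pow_anti {n m : ℕ} (h : n ≤ m) : (1:ℝ)/2^m ≤ 1/2^n := by
  apply one_div_le_one_div_of_le (by positivity)
  exact pow_le_pow_right₀ one_le_two h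

lemma one_div_pow_succ (n : ℕ) : (1:ℝ)/2^(n+1) = (1/2^n)/2 := by
  rw [pow_succ]; ring

lemma Iset_bounds {n m : ℕ} (hm : 1 ≤ m) {x : ℝ} (hx : x ∈ Iset n m) :
    (1:ℝ)/2^n ≤ x ∧ x ≤ 1/2^n + (1/2^n)/2 := by
  obtain ⟨h1, h2⟩ := hx
  refine ⟨h1, h2.trans ?_⟩
  have h3 : (1:ℝ)/2^(n+m) ≤ 1/2^(n+1) := one_div_pow_anti (by omega)
  have h4 := one_div_pow_succ n
  linarith

lemma Iset_pos {n m : ℕ} {x : ℝ} (hx : x ∈ Iset n m) : 0 < x :=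
  lt_of_lt_of_le (by positivity) hx.1

lemma Iset_idx_unique {n m : ℕ+} {a b : ℕ} (ha : 1 ≤ a) (hb : 1 ≤ b) {x : ℝ}
    (hx : x ∈ Iset (n : ℕ) a) (hy : x ∈ Iset (m : ℕ) b) : n = m := by
  have key : ∀ (n m : ℕ+) (a b : ℕ), 1 ≤ a → 1 ≤ b → (n : ℕ) < (m : ℕ) →
      x ∈ Iset (n : ℕ) a → x ∈ Iset (m : ℕ) b → False := by
    intro n m a b ha hb hlt hx hy
    obtain ⟨h1, _⟩ := Iset_bounds ha hx
    obtain ⟨_, h4⟩ := Iset_bounds hb hy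
    -- x ≥ 1/2^n ≥ 2 * (1/2^m)  but  x ≤ (3/2) * (1/2^m)
    have h5 : (1:ℝ)/2^(m:ℕ) ≤ 1/2^((n:ℕ)+1) := one_div_pow_anti (by omega)
    have h6 := one_div_pow_succ (n : ℕ)
    have h7 : (0:ℝ) < 1/2^(m:ℕ) := by positivity
    linarith
  rcases lt_trichotomy (n : ℕ) (m : ℕ) with h | h | h
  · exact absurd (key n m a b ha hb h hx hy) (by simp)
  · exact PNat.coe_injective h
  · exact absurd (key m n b a hb ha h hy hx) (by simp)

lemma trans_eq_of_mem (u v : ℕ+ → ℕ) (hu : ∀ n, 1 ≤ u n) {n : ℕ+} {x : ℝ}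
    (hx : x ∈ Iset (n : ℕ) (u n)) :
    trans u v x = 1/2^(n:ℕ) + (x - 1/2^(n:ℕ)) * (2^(u n) / 2^(v n)) := by
  have hex : ∃ m : ℕ+, x ∈ Iset (m : ℕ) (u m) := ⟨n, hx⟩
  rw [trans, dif_pos hex]
  have h : hex.choose = n := Iset_idx_unique (hu _) (hu _) hex.choose_spec hx
  rw [h]

lemma trans_zero (u v : ℕ+ → ℕ) : trans u v 0 = 0 := by
  rw [trans, dif_neg]
  rintro ⟨n, h1, -⟩
  have : (0:ℝ) < 1/2^(n:ℕ) := by positivity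
  linarith

lemma trans_mem_Iset (u v : ℕ+ → ℕ) (hu : ∀ n, 1 ≤ u n) {n : ℕ+} {x : ℝ}
    (hx : x ∈ Iset (n : ℕ) (u n)) : trans u v x ∈ Iset (n : ℕ) (v n) := by
  rw [trans_eq_of_mem u v hu hx]
  obtain ⟨h1, h2⟩ := hx
  have hr : (0:ℝ) < 2^(u n) / 2^(v n) := by positivity
  constructor
  · nlinarith [mul_nonneg (sub_nonneg.2 h1) hr.le]
  · have key : (1:ℝ)/2^((n:ℕ) + u n) * (2^(u n) / 2^(v n)) = 1/2^((n:ℕ) + v n) := by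
      rw [pow_add, pow_add]
      field_simp
    have h3 : x - 1/2^(n:ℕ) ≤ 1/2^((n:ℕ) + u n) := by linarith
    have h4 := mul_le_mul_of_nonneg_right h3 hr.le
    rw [key] at h4
    linarith

lemma trans_mem_Xset (u v : ℕ+ → ℕ) (hu : ∀ n, 1 ≤ u n) {x : ℝ}
    (hx : x ∈ Xset u) : trans u v x ∈ Xset v := by
  rcases hx with h | h
  · left
    simp only [Set.mem_singleton_iff] at h ⊢
    rw [h, trans_zero]
  · obtain ⟨n, hn⟩ := Set.mem_iUnion.1 h
    exact Or.inr (Set.mem_iUnion.2 ⟨n, trans_mem_Iset u v hu hn⟩)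

lemma trans_trans (u v : ℕ+ → ℕ) (hu : ∀ n, 1 ≤ u n) (hv : ∀ n, 1 ≤ v n) {x : ℝ}
    (hx : x ∈ Xset u) : trans v u (trans u v x) = x := by
  rcases hx with h | h
  · simp only [Set.mem_singleton_iff] at h
    rw [h, trans_zero, trans_zero]
  · obtain ⟨n, hn⟩ := Set.mem_iUnion.1 h
    have h2 := trans_mem_Iset u v hu hn
    rw [trans_eq_of_mem u v hu hn] at h2 ⊢
    rw [trans_eq_of_mem v u hv h2]
    have e1 : (0:ℝ) < 2^(u n) := by positivity
    have e2 : (0:ℝ) < 2^(v n) := by positivity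
    field_simp
    ring

lemma ratio_bounds {a b : ℕ} (ha : a = 1 ∨ a = 2) (hb : b = 1 ∨ b = 2) :
    (1:ℝ)/2 ≤ 2^a/2^b ∧ (2:ℝ)^a/2^b ≤ 2 := by
  rcases ha with h | h <;> rcases hb with h' | h' <;> subst h <;> subst h' <;> norm_num

/-- The key two-sided estimate: `trans` distorts distances by a factor of at most 2. -/
lemma trans_dist_key (u v : ℕ+ → ℕ) (hu : ∀ n, u n = 1 ∨ u n = 2)
    (hv : ∀ n, v n = 1 ∨ v n = 2) {x y : ℝ} (hx : x ∈ Xset u) (hy : y ∈ Xset u)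
    (hxy : x ≤ y) :
    trans u v y - trans u v x ≤ 2 * (y - x) ∧ y - x ≤ 2 * (trans u v y - trans u v x) := by
  have hu1 : ∀ n, 1 ≤ u n := fun n => by rcases hu n with h | h <;> omega
  have hv1 : ∀ n, 1 ≤ v n := fun n => by rcases hv n with h | h <;> omega
  rcases hy with h0y | hiy
  · -- y = 0, so x = 0 too
    simp only [Set.mem_singleton_iff] at h0y
    subst h0y
    have hx0 : x = 0 := by
      rcases hx with h | h
      · simpa using h
      · obtain ⟨n, hn⟩ := Set.mem_iUnion.1 h
        exact absurd hxy (not_le.2 (Iset_pos hn))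
    subst hx0
    simp
  · obtain ⟨n, hn⟩ := Set.mem_iUnion.1 hiy
    obtain ⟨hy1, hy2⟩ := Iset_bounds (hu1 n) hn
    have hgy := trans_mem_Iset u v hu1 hn
    obtain ⟨hgy1, hgy2⟩ := Iset_bounds (hv1 n) hgy
    -- ratio bounds at n
    have hrn := ratio_bounds (hu n) (hv n)
    have hyrel : trans u v y - 1/2^(n:ℕ) = (y - 1/2^(n:ℕ)) * (2^(u n)/2^(v n)) := by
      rw [trans_eq_of_mem u v hu1 hn]; ring
    have hy0 : 0 ≤ y - 1/2^(n:ℕ) := by linarith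
    have hyd1 : trans u v y - 1/2^(n:ℕ) ≤ 2 * (y - 1/2^(n:ℕ)) := by
      rw [hyrel]
      nlinarith [mul_le_mul_of_nonneg_left hrn.2 hy0]
    have hyd2 : (y - 1/2^(n:ℕ))/2 ≤ trans u v y - 1/2^(n:ℕ) := by
      rw [hyrel]
      nlinarith [mul_le_mul_of_nonneg_left hrn.1 hy0]
    rcases hx with h0x | hix
    · -- x = 0
      simp only [Set.mem_singleton_iff] at h0x
      subst h0x
      rw [trans_zero]
      have hap : (0:ℝ) < 1/2^(n:ℕ) := by positivity
      constructor <;> linarith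
    · obtain ⟨m, hm⟩ := Set.mem_iUnion.1 hix
      obtain ⟨hx1, hx2⟩ := Iset_bounds (hu1 m) hm
      have hgx := trans_mem_Iset u v hu1 hm
      obtain ⟨hgx1, hgx2⟩ := Iset_bounds (hv1 m) hgx
      have hrm := ratio_bounds (hu m) (hv m)
      have hxrel : trans u v x - 1/2^(m:ℕ) = (x - 1/2^(m:ℕ)) * (2^(u m)/2^(v m)) := by
        rw [trans_eq_of_mem u v hu1 hm]; ring
      have hx0 : 0 ≤ x - 1/2^(m:ℕ) := by linarith
      have hxd1 : trans u v x - 1/2^(m:ℕ) ≤ 2 * (x - 1/2^(m:ℕ)) := by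
        rw [hxrel]
        nlinarith [mul_le_mul_of_nonneg_left hrm.2 hx0]
      have hxd2 : (x - 1/2^(m:ℕ))/2 ≤ trans u v x - 1/2^(m:ℕ) := by
        rw [hxrel]
        nlinarith [mul_le_mul_of_nonneg_left hrm.1 hx0]
      by_cases hnm : n = m
      · subst hnm
        have hsub : trans u v y - trans u v x = (y - x) * (2^(u n)/2^(v n)) := by
          rw [trans_eq_of_mem u v hu1 hn, trans_eq_of_mem u v hu1 hm]; ring
        have hyx0 : 0 ≤ y - x := by linarith
        constructor
        · rw [hsub]; nlinarith [mul_le_mul_of_nonneg_left hrn.2 hyx0]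
        · rw [hsub]; nlinarith [mul_le_mul_of_nonneg_left hrn.1 hyx0]
      · -- distinct intervals: necessarily n < m
        have hlt : (n:ℕ) < (m:ℕ) := by
          rcases lt_trichotomy (n:ℕ) (m:ℕ) with h | h | h
          · exact h
          · exact absurd (PNat.coe_injective h) hnm
          · -- m < n: then x ≥ 1/2^m ≥ 2/2^n > (3/2)/2^n ≥ y, contradiction
            exfalso
            have h5 : (1:ℝ)/2^(n:ℕ) ≤ 1/2^((m:ℕ)+1) := one_div_pow_anti (by omega)
            have h6 := one_div_pow_succ (m:ℕ)
            have h7 : (0:ℝ) < 1/2^(n:ℕ) := by positivity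
            linarith
        -- b := 1/2^m ≤ a/2 where a := 1/2^n
        have hba : (1:ℝ)/2^(m:ℕ) ≤ (1/2^(n:ℕ))/2 := by
          have h5 : (1:ℝ)/2^(m:ℕ) ≤ 1/2^((n:ℕ)+1) := one_div_pow_anti (by omega)
          have h6 := one_div_pow_succ (n:ℕ)
          linarith
        constructor <;> linarith

/-- The equivalence between `Xset u` and `Xset v`. -/
noncomputable def transEquiv (u v : ℕ+ → ℕ) (hu : ∀ n, 1 ≤ u n) (hv : ∀ n, 1 ≤ v n) :
    ↥(Xset u) ≃ ↥(Xset v) where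
  toFun x := ⟨trans u v x, trans_mem_Xset u v hu x.2⟩
  invFun y := ⟨trans v u y, trans_mem_Xset v u hv y.2⟩
  left_inv x := Subtype.ext (trans_trans u v hu hv x.2)
  right_inv y := Subtype.ext (trans_trans v u hv hu y.2)

lemma lipschitz_transEquiv (u v : ℕ+ → ℕ) (hu : ∀ n, u n = 1 ∨ u n = 2)
    (hv : ∀ n, v n = 1 ∨ v n = 2) (hu1 : ∀ n, 1 ≤ u n) (hv1 : ∀ n, 1 ≤ v n) :
    LipschitzWith 2 (transEquiv u v hu1 hv1) := by
  apply LipschitzWith.of_dist_le_mul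
  intro p q
  have key : ∀ x y : ↥(Xset u), (x:ℝ) ≤ (y:ℝ) →
      dist (transEquiv u v hu1 hv1 x) (transEquiv u v hu1 hv1 y) ≤ 2 * dist x y := by
    intro x y hxy
    obtain ⟨h1, h2⟩ := trans_dist_key u v hu hv x.2 y.2 hxy
    rw [Subtype.dist_eq, Subtype.dist_eq, Real.dist_eq, Real.dist_eq]
    show |trans u v x - trans u v y| ≤ 2 * |(x:ℝ) - (y:ℝ)|
    rw [abs_sub_comm, abs_sub_comm (x:ℝ)]
    rw [abs_of_nonneg (by linarith), abs_of_nonneg (by linarith)]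
    linarith
  have goal2 : dist (transEquiv u v hu1 hv1 p) (transEquiv u v hu1 hv1 q) ≤ 2 * dist p q := by
    rcases le_total (p:ℝ) (q:ℝ) with h | h
    · exact key p q h
    · rw [dist_comm, dist_comm p q]
      exact key q p h
  exact_mod_cast goal2

/-- Bound on `|log (dil f)|` for a map that is `2`-Lipschitz with `2`-Lipschitz inverse,
on a space with at least two points. -/
lemma abs_log_dil_le {X Y : Type*} [MetricSpace X] [MetricSpace Y] (f : X ≃ Y)
    (hf : LipschitzWith 2 f) (hg : LipschitzWith 2 f.symm)
    (x0 y0 : X) (hne : x0 ≠ y0) : |Real.log (dil (f : X → Y))| ≤ Real.log 2 := by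
  set S : Set ℝ := {K : ℝ | ∀ x y : X, dist (f x) (f y) ≤ K * dist x y} with hS
  have h2mem : (2:ℝ) ∈ S := by
    intro x y
    have := hf.dist_le_mul x y
    push_cast at this
    exact this
  have hlow : ∀ K ∈ S, (1:ℝ)/2 ≤ K := by
    intro K hK
    have h1 := hK x0 y0
    have h2 := hg.dist_le_mul (f x0) (f y0)
    simp only [Equiv.symm_apply_apply] at h2
    push_cast at h2
    have hd : 0 < dist x0 y0 := dist_pos.2 hne
    nlinarith
  have hdle : dil (f : X → Y) ≤ 2 := csInf_le ⟨1/2, hlow⟩ h2mem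
  have hdge : (1:ℝ)/2 ≤ dil (f : X → Y) := le_csInf ⟨2, h2mem⟩ hlow
  have hdpos : 0 < dil (f : X → Y) := by linarith
  rw [abs_le]
  constructor
  · have := Real.log_le_log (by norm_num : (0:ℝ) < 1/2) hdge
    rw [one_div, Real.log_inv] at this
    linarith
  · exact Real.log_le_log hdpos hdle

lemma lipCost_le {X Y : Type*} [MetricSpace X] [MetricSpace Y] (f : X ≃ Y)
    (hf : LipschitzWith 2 f) (hg : LipschitzWith 2 f.symm)
    (x0 y0 : X) (hne : x0 ≠ y0) : lipCost f ≤ 2 * Real.log 2 := by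
  have h1 := abs_log_dil_le f hf hg x0 y0 hne
  have hne' : f x0 ≠ f y0 := fun h => hne (f.injective h)
  have h2 := abs_log_dil_le f.symm hg (by rwa [Equiv.symm_symm]) (f x0) (f y0) hne'
  rw [lipCost]
  linarith

end XsetAux

open XsetAux in
/-- For any `u, v ∈ {1,2}^{ℤ>0}`, `d_L(X_u, X_v) ≤ 2 log 2`. -/
theorem lipDist_Xset_le (u v : ℕ+ → ℕ) (hu : ∀ n, u n = 1 ∨ u n = 2)
    (hv : ∀ n, v n = 1 ∨ v n = 2) :
    lipDist ↥(Xset u) ↥(Xset v) ≤ ENNReal.ofReal (2 * Real.log 2) := by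
  have hu1 : ∀ n, 1 ≤ u n := fun n => by rcases hu n with h | h <;> omega
  have hv1 : ∀ n, 1 ≤ v n := fun n => by rcases hv n with h | h <;> omega
  set f := transEquiv u v hu1 hv1 with hf
  have hfl : LipschitzWith 2 f := lipschitz_transEquiv u v hu hv hu1 hv1
  have hfsymm : f.symm = transEquiv v u hv1 hu1 := by
    ext y
    rfl
  have hgl : LipschitzWith 2 f.symm := by
    rw [hfsymm]
    exact lipschitz_transEquiv v u hv hu hv1 hu1
  -- two distinct points of Xset u
  have h0mem : (0:ℝ) ∈ Xset u := Or.inl rfl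
  have hhalfmem : (1/2:ℝ) ∈ Xset u := by
    right
    refine Set.mem_iUnion.2 ⟨1, ?_⟩
    simp only [Iset, PNat.one_coe, pow_one, Set.mem_Icc]
    constructor
    · norm_num
    · have h : (0:ℝ) < 1/2^(1 + u 1) := by positivity
      linarith
  set x0 : ↥(Xset u) := ⟨0, h0mem⟩
  set y0 : ↥(Xset u) := ⟨1/2, hhalfmem⟩
  have hne : x0 ≠ y0 := by
    intro h
    have := congrArg Subtype.val h
    norm_num [x0, y0] at this
  have hbi : IsBiLipschitzEquiv f := ⟨⟨2, hfl⟩, ⟨2, hgl⟩⟩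
  calc lipDist ↥(Xset u) ↥(Xset v) ≤ ENNReal.ofReal (lipCost f) := by
        rw [lipDist]
        exact iInf₂_le f hbi
    _ ≤ ENNReal.ofReal (2 * Real.log 2) :=
        ENNReal.ofReal_le_ofReal (lipCost_le f hfl hgl x0 y0 hne)
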